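/- Let M and N be closed Riemannian n-manifolds, f : M → N an L-Lipschitz map preserving the volume of measurable sets (vol_N(f(A)) = vol_M(A) for all measurable A), and suppose almost every point of N has at most one preimage. Suppose there is r₀ > 0 such that vol_M(B_r(x)) ≥ (3/4)ωₙrⁿ and vol_N(B_r(y)) ≤ (4/3)ωₙrⁿ for all r ≤ r₀, x ∈ M, y ∈ N. Then every point y ∈ N has at most (16/9)·Lⁿ preimages under f. -/

import Mathlib

open MeasureTheory Metric Set
open scoped ENNReal NNReal

/-- `ω k`: the Lebesgue volume of the `k`-dimensional Euclidean unit ball. -/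
noncomputable def unitBallVolume (k : ℕ) : ℝ≥0∞ :=
  volume (Metric.ball (0 : EuclideanSpace ℝ (Fin k)) 1)

lemma stmt11_aux {M N : Type*}
    [MetricSpace M] [MeasurableSpace M] [BorelSpace M] [CompactSpace M]
    [MetricSpace N] [MeasurableSpace N] [BorelSpace N]
    (n : ℕ)
    (f : M → N) (L : ℝ≥0) (hf : LipschitzWith L f)
    (hvolpres : ∀ A : Set M, MeasurableSet A →
      (μH[n] : Measure N) (f '' A) = (μH[n] : Measure M) A)
    (hinj : ∀ᵐ y ∂(μH[n] : Measure N), (f ⁻¹' {y}).encard ≤ 1)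
    (r₀ : ℝ) (hr₀ : 0 < r₀)
    (hM : ∀ (x : M) (r : ℝ), 0 < r → r ≤ r₀ →
      (3 / 4 : ℝ≥0∞) * unitBallVolume n * ENNReal.ofReal (r ^ n)
        ≤ (μH[n] : Measure M) (Metric.ball x r))
    (hN : ∀ (y : N) (r : ℝ), 0 < r → r ≤ r₀ →
      (μH[n] : Measure N) (Metric.ball y r)
        ≤ (4 / 3 : ℝ≥0∞) * unitBallVolume n * ENNReal.ofReal (r ^ n))
    (y : N) (S : Finset M) (hS : ↑S ⊆ f ⁻¹' {y}) :
    ((S.card : ℝ≥0∞)) ≤ ENNReal.ofReal (16 / 9 * (L : ℝ) ^ n) := by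
  classical
  have hω0 : unitBallVolume n ≠ 0 :=
    (measure_ball_pos _ (0 : EuclideanSpace ℝ (Fin n)) one_pos).ne'
  have hωt : unitBallVolume n ≠ ∞ := measure_ball_lt_top.ne
  have key : ∀ ε : ℝ, 0 < ε → (S.card : ℝ) ≤ 16 / 9 * ((L : ℝ) + ε) ^ n := by
    intro ε hε
    obtain ⟨c, hc0, hc⟩ : ∃ c > 0, ∀ a ∈ S, ∀ b ∈ S, a ≠ b → c ≤ dist a b := by
      set T := (S ×ˢ S).filter (fun p => p.1 ≠ p.2) with hT
      by_cases hTne : T.Nonempty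
      · refine ⟨T.inf' hTne (fun p => dist p.1 p.2), ?_, ?_⟩
        · rw [gt_iff_lt, Finset.lt_inf'_iff]
          rintro ⟨a, b⟩ hab
          simp only [hT, Finset.mem_filter] at hab
          exact dist_pos.mpr hab.2
        · intro a ha b hb hab
          have hmem : (a, b) ∈ T := Finset.mem_filter.mpr
            ⟨Finset.mem_product.mpr ⟨ha, hb⟩, hab⟩
          exact Finset.inf'_le (fun p => dist p.1 p.2) hmem
      · exact ⟨1, one_pos, fun a ha b hb hab =>
          absurd ⟨(a, b), Finset.mem_filter.mpr
            ⟨Finset.mem_product.mpr ⟨ha, hb⟩, hab⟩⟩ hTne⟩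
    set Lε : ℝ := (L : ℝ) + ε with hLεdef
    have hLε0 : 0 < Lε := by positivity
    set r : ℝ := min (min r₀ (r₀ / Lε)) (c / 3) with hrdef
    have hr0 : 0 < r := lt_min (lt_min hr₀ (div_pos hr₀ hLε0)) (by positivity)
    have hrr₀ : r ≤ r₀ := (min_le_left _ _).trans (min_le_left _ _)
    have hrc : r ≤ c / 3 := min_le_right _ _
    have hLr : Lε * r ≤ r₀ := by
      have : r ≤ r₀ / Lε := (min_le_left _ _).trans (min_le_right _ _)
      calc Lε * r ≤ Lε * (r₀ / Lε) := by nlinarith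
        _ = r₀ := by field_simp
    have hdisj : ∀ a ∈ S, ∀ b ∈ S, a ≠ b →
        Disjoint (closedBall a r) (closedBall b r) := by
      intro a ha b hb hab
      rw [Set.disjoint_left]
      intro z hza hzb
      have h1 : dist z a ≤ r := mem_closedBall.mp hza
      have h2 : dist z b ≤ r := mem_closedBall.mp hzb
      have h3 : c ≤ dist a b := hc a ha b hb hab
      have h4 : dist a b ≤ dist a z + dist z b := dist_triangle a z b
      rw [dist_comm a z] at h4
      linarith
    have himg : ∀ a : M, MeasurableSet (f '' closedBall a r) := fun a =>
      (((isClosed_closedBall).isCompact.image hf.continuous).isClosed).measurableSet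
    have hnull : (μH[n] : Measure N) {z : N | ¬ (f ⁻¹' {z}).encard ≤ 1} = 0 :=
      ae_iff.mp hinj
    have hAE : (↑S : Set M).Pairwise
        (Function.onFun (AEDisjoint (μH[n] : Measure N))
          (fun a => f '' closedBall a r)) := by
      intro a ha b hb hab
      refine measure_mono_null ?_ hnull
      rintro z ⟨⟨a', ha', rfl⟩, b', hb', hfb⟩
      intro hle
      have hmem1 : a' ∈ f ⁻¹' {f a'} := by simp
      have hmem2 : b' ∈ f ⁻¹' {f a'} := by simp [hfb]
      have : a' = b' := (Set.encard_le_one_iff.mp hle a' b' hmem1 hmem2)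
      exact (Set.disjoint_left.mp (hdisj a ha b hb hab) ha' (this ▸ hb'))
    have hsub : (⋃ a ∈ S, f '' closedBall a r) ⊆ ball y (Lε * r) := by
      refine Set.iUnion₂_subset fun a ha => ?_
      rintro z ⟨w, hw, rfl⟩
      have hya : f a = y := hS ha
      have h1 : dist (f w) (f a) ≤ L * dist w a := hf.dist_le_mul w a
      have h2 : dist w a ≤ r := mem_closedBall.mp hw
      have h3 : (L : ℝ) * dist w a ≤ L * r := by
        have := L.coe_nonneg; nlinarith [dist_nonneg (x := w) (y := a)]
      rw [mem_ball, ← hya]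
      have : (L : ℝ) * r < Lε * r := by nlinarith
      linarith
    have main : (S.card : ℝ≥0∞) * ((3 / 4 : ℝ≥0∞) * unitBallVolume n * ENNReal.ofReal (r ^ n))
        ≤ (4 / 3 : ℝ≥0∞) * unitBallVolume n * ENNReal.ofReal ((Lε * r) ^ n) := by
      calc (S.card : ℝ≥0∞) * ((3 / 4 : ℝ≥0∞) * unitBallVolume n * ENNReal.ofReal (r ^ n))
          = S.card • ((3 / 4 : ℝ≥0∞) * unitBallVolume n * ENNReal.ofReal (r ^ n)) := by
            rw [nsmul_eq_mul]
        _ ≤ ∑ a ∈ S, (μH[n] : Measure M) (closedBall a r) := by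
            refine Finset.card_nsmul_le_sum S _ _ fun a _ => ?_
            exact (hM a r hr0 hrr₀).trans (measure_mono ball_subset_closedBall)
        _ = ∑ a ∈ S, (μH[n] : Measure N) (f '' closedBall a r) :=
            (Finset.sum_congr rfl fun a _ =>
              (hvolpres _ measurableSet_closedBall).symm)
        _ = (μH[n] : Measure N) (⋃ a ∈ S, f '' closedBall a r) :=
            (measure_biUnion_finset₀ hAE fun a _ => (himg a).nullMeasurableSet).symm
        _ ≤ (μH[n] : Measure N) (ball y (Lε * r)) := measure_mono hsub
        _ ≤ (4 / 3 : ℝ≥0∞) * unitBallVolume n * ENNReal.ofReal ((Lε * r) ^ n) :=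
            hN y (Lε * r) (by positivity) hLr
    have hsplit : ENNReal.ofReal ((Lε * r) ^ n)
        = ENNReal.ofReal (Lε ^ n) * ENNReal.ofReal (r ^ n) := by
      rw [mul_pow, ENNReal.ofReal_mul (by positivity)]
    rw [hsplit] at main
    have hC0 : unitBallVolume n * ENNReal.ofReal (r ^ n) ≠ 0 := by
      simp [hω0, ENNReal.ofReal_eq_zero, not_le, pow_pos hr0]
    have hCt : unitBallVolume n * ENNReal.ofReal (r ^ n) ≠ ∞ :=
      ENNReal.mul_ne_top hωt ENNReal.ofReal_ne_top
    have main2 : (S.card : ℝ≥0∞) * (3 / 4) ≤ (4 / 3) * ENNReal.ofReal (Lε ^ n) := by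
      have h1 : ((S.card : ℝ≥0∞) * (3 / 4)) * (unitBallVolume n * ENNReal.ofReal (r ^ n))
          ≤ ((4 / 3) * ENNReal.ofReal (Lε ^ n)) * (unitBallVolume n * ENNReal.ofReal (r ^ n)) := by
        calc ((S.card : ℝ≥0∞) * (3 / 4)) * (unitBallVolume n * ENNReal.ofReal (r ^ n))
            = (S.card : ℝ≥0∞) * ((3 / 4 : ℝ≥0∞) * unitBallVolume n * ENNReal.ofReal (r ^ n)) := by
              ring
          _ ≤ (4 / 3 : ℝ≥0∞) * unitBallVolume n * (ENNReal.ofReal (Lε ^ n) * ENNReal.ofReal (r ^ n)) := main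
          _ = ((4 / 3) * ENNReal.ofReal (Lε ^ n)) * (unitBallVolume n * ENNReal.ofReal (r ^ n)) := by
              ring
      exact (ENNReal.mul_le_mul_iff_left hC0 hCt).mp h1
    have hreal : (S.card : ℝ) * (3 / 4) ≤ (4 / 3) * Lε ^ n := by
      have ht : (4 / 3 : ℝ≥0∞) * ENNReal.ofReal (Lε ^ n) ≠ ∞ :=
        ENNReal.mul_ne_top (ENNReal.div_lt_top (by norm_num) (by norm_num)).ne ENNReal.ofReal_ne_top
      have := ENNReal.toReal_mono ht main2
      simpa [ENNReal.toReal_mul, ENNReal.toReal_ofReal (by positivity : (0:ℝ) ≤ Lε ^ n),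
        ENNReal.toReal_div] using this
    nlinarith [pow_nonneg hLε0.le n]
  have hlim : (S.card : ℝ) ≤ 16 / 9 * (L : ℝ) ^ n := by
    have hcont : Filter.Tendsto (fun ε : ℝ => 16 / 9 * ((L : ℝ) + ε) ^ n)
        (nhdsWithin 0 (Set.Ioi 0)) (nhds (16 / 9 * (L : ℝ) ^ n)) := by
      have : Continuous (fun ε : ℝ => 16 / 9 * ((L : ℝ) + ε) ^ n) := by continuity
      have h := this.tendsto 0
      simp only [add_zero] at h
      exact h.mono_left nhdsWithin_le_nhds
    refine ge_of_tendsto hcont ?_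
    filter_upwards [self_mem_nhdsWithin] with ε hε using key ε hε
  calc (S.card : ℝ≥0∞) = ENNReal.ofReal (S.card : ℝ) := by
        rw [ENNReal.ofReal_natCast]
    _ ≤ ENNReal.ofReal (16 / 9 * (L : ℝ) ^ n) := ENNReal.ofReal_le_ofReal hlim

/-!
STATEMENT 11: `M`, `N` closed Riemannian `n`-manifolds (compact metric spaces
with `n`-manifold structure, Riemannian volume = Hausdorff measure `μH[n]`),
`f : M → N` an `L`-Lipschitz map preserving the volume of measurable sets, such
that a.e. point of `N` has at most one preimage.  If `r₀ > 0` is such that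
`vol_M(B_r(x)) ≥ (3/4) ωₙ rⁿ` and `vol_N(B_r(y)) ≤ (4/3) ωₙ rⁿ` for all
`0 < r ≤ r₀`, `x ∈ M`, `y ∈ N`, then every `y ∈ N` has at most `(16/9)·Lⁿ`
preimages under `f`.
-/
theorem stmt11 {M N : Type*}
    [MetricSpace M] [MeasurableSpace M] [BorelSpace M] [CompactSpace M]
    [MetricSpace N] [MeasurableSpace N] [BorelSpace N] [CompactSpace N]
    (n : ℕ)
    [ChartedSpace (EuclideanSpace ℝ (Fin n)) M]
    [ChartedSpace (EuclideanSpace ℝ (Fin n)) N]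
    (f : M → N) (L : ℝ≥0) (hf : LipschitzWith L f)
    (hvolpres : ∀ A : Set M, MeasurableSet A →
      (μH[n] : Measure N) (f '' A) = (μH[n] : Measure M) A)
    (hinj : ∀ᵐ y ∂(μH[n] : Measure N), (f ⁻¹' {y}).encard ≤ 1)
    (r₀ : ℝ) (hr₀ : 0 < r₀)
    (hM : ∀ (x : M) (r : ℝ), 0 < r → r ≤ r₀ →
      (3 / 4 : ℝ≥0∞) * unitBallVolume n * ENNReal.ofReal (r ^ n)
        ≤ (μH[n] : Measure M) (Metric.ball x r))
    (hN : ∀ (y : N) (r : ℝ), 0 < r → r ≤ r₀ →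
      (μH[n] : Measure N) (Metric.ball y r)
        ≤ (4 / 3 : ℝ≥0∞) * unitBallVolume n * ENNReal.ofReal (r ^ n)) :
    ∀ y : N, ((f ⁻¹' {y}).encard : ℝ≥0∞) ≤ ENNReal.ofReal (16 / 9 * (L : ℝ) ^ n) := by
  intro y
  rcases (f ⁻¹' {y}).finite_or_infinite with hfin | hinf
  · have h := stmt11_aux n f L hf hvolpres hinj r₀ hr₀ hM hN y hfin.toFinset
      (by rw [Set.Finite.coe_toFinset])
    rw [hfin.encard_eq_coe_toFinset_card]
    simpa using h
  · exfalso
    set k : ℕ := ⌈(16 / 9 * (L : ℝ) ^ n)⌉₊ + 1 with hk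
    obtain ⟨S, hSsub, hScard⟩ := hinf.exists_subset_card_eq k
    have h := stmt11_aux n f L hf hvolpres hinj r₀ hr₀ hM hN y S hSsub
    rw [hScard] at h
    have h2 : ((k : ℝ≥0∞)) ≤ (⌈(16 / 9 * (L : ℝ) ^ n)⌉₊ : ℝ≥0∞) := by
      refine h.trans ?_
      rw [← ENNReal.ofReal_natCast]
      exact ENNReal.ofReal_le_ofReal (Nat.le_ceil _)
    rw [Nat.cast_le] at h2
    omega
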